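/- arXiv:2604.17415 — 5 statements merged into one kernel-verified Lean document; each statement's English description precedes it below -/
import Mathlib

section
/- Let d ≥ 1, α > 0, σ > 0, μ ∈ ℝ^d, and let V : ℝ^d → ℝ be continuously differentiable. Suppose Z := ∫_{ℝ^d} exp(V(y)/α) φ_{μ,σ}(y) dy is finite and positive, and define the exponentially tilted density q(y) := exp(V(y)/α) φ_{μ,σ}(y) / Z. Assume that y ↦ y_j q(y), y ↦ ∂_j V(y) q(y), and y ↦ ∂_j q(y) are Lebesgue integrable on ℝ^d for every coordinate j, and that for every j and almost every fixed choice of the remaining coordinates, q(y) → 0 as y_j → ±∞. Then the mean of q satisfies ∫_{ℝ^d} y q(y) dy = μ + (σ²/α) ∫_{ℝ^d} ∇V(y) q(y) dy. -/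
open MeasureTheory Filter

lemma aux_integral_fderiv_zero {n : ℕ} (j : Fin (n + 1))
    (f f' : EuclideanSpace ℝ (Fin (n + 1)) → ℝ)
    (hderiv : ∀ (y : EuclideanSpace ℝ (Fin (n + 1))) (r : ℝ),
      HasDerivAt (fun s => f (WithLp.toLp 2 (Function.update y j s))) (f' (WithLp.toLp 2 (Function.update y j r))) r)
    (hint : Integrable f')
    (htail : ∀ᵐ y : EuclideanSpace ℝ (Fin (n + 1)),
      Tendsto (fun r : ℝ => f (WithLp.toLp 2 (Function.update y j r))) atTop (nhds 0) ∧
      Tendsto (fun r : ℝ => f (WithLp.toLp 2 (Function.update y j r))) atBot (nhds 0)) :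
    ∫ y, f' y = 0 := by
  classical
  set e : EuclideanSpace ℝ (Fin (n + 1)) ≃ᵐ ℝ × (Fin n → ℝ) :=
    (MeasurableEquiv.toLp 2 (Fin (n + 1) → ℝ)).symm.trans
      (MeasurableEquiv.piFinSuccAbove (fun _ => ℝ) j) with he_def
  have he : MeasurePreserving e :=
    (volume_preserving_piFinSuccAbove (fun _ => ℝ) j).comp
      (EuclideanSpace.volume_preserving_symm_measurableEquiv_toLp (Fin (n + 1)))
  have hupd : ∀ (r s : ℝ) (x : Fin n → ℝ),
      WithLp.toLp 2 (Function.update (e.symm (r, x)) j s) = e.symm (s, x) := by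
    intro r s x
    simp only [he_def, MeasurableEquiv.trans, MeasurableEquiv.piFinSuccAbove,
      MeasurableEquiv.symm_mk, MeasurableEquiv.coe_mk,
      Equiv.symm_trans_apply, Equiv.symm_symm, Fin.insertNthEquiv_apply]
    exact congrArg (WithLp.toLp 2) (Fin.update_insertNth (α := fun _ => ℝ) j r s x)
  have h0 : ∫ y, f' y = ∫ p : ℝ × (Fin n → ℝ), f' (e.symm p) :=
    ((MeasurePreserving.symm e he).integral_comp e.symm.measurableEmbedding f').symm
  have hF : Integrable (fun p : ℝ × (Fin n → ℝ) => f' (e.symm p)) :=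
    ((MeasurePreserving.symm e he).integrable_comp_emb e.symm.measurableEmbedding).mpr hint
  have hFprod : Integrable (fun p : ℝ × (Fin n → ℝ) => f' (e.symm p))
      ((volume : Measure ℝ).prod (volume : Measure (Fin n → ℝ))) := by
    rwa [← Measure.volume_eq_prod]
  have hsliceInt : ∀ᵐ x : Fin n → ℝ, Integrable (fun r => f' (e.symm (r, x))) :=
    hFprod.prod_left_ae
  have htail' : ∀ᵐ x : Fin n → ℝ,
      Tendsto (fun s : ℝ => f (e.symm (s, x))) atTop (nhds 0) ∧
      Tendsto (fun s : ℝ => f (e.symm (s, x))) atBot (nhds 0) := by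
    have h1 : ∀ᵐ p : ℝ × (Fin n → ℝ),
        Tendsto (fun s : ℝ => f (WithLp.toLp 2 (Function.update (e.symm p) j s))) atTop (nhds 0) ∧
        Tendsto (fun s : ℝ => f (WithLp.toLp 2 (Function.update (e.symm p) j s))) atBot (nhds 0) :=
      (MeasurePreserving.symm e he).quasiMeasurePreserving.ae htail
    rw [Measure.volume_eq_prod] at h1
    have h2 := Measure.ae_ae_of_ae_prod h1
    obtain ⟨r₀, hr₀⟩ := h2.exists
    filter_upwards [hr₀] with x hx
    simpa only [hupd r₀] using hx
  have hzero : ∀ᵐ x : Fin n → ℝ, (∫ r, f' (e.symm (r, x))) = 0 := by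
    filter_upwards [hsliceInt, htail'] with x hxi hxt
    have hD : ∀ r : ℝ, HasDerivAt (fun s => f (e.symm (s, x))) (f' (e.symm (r, x))) r := by
      intro r
      have h := hderiv (e.symm (r, x)) r
      simpa only [hupd r] using h
    have := integral_of_hasDerivAt_of_tendsto hD hxi hxt.2 hxt.1
    simpa using this
  rw [h0, Measure.volume_eq_prod, integral_prod_symm _ hFprod]
  rw [integral_congr_ae hzero, integral_zero]

/-- The density of the Gaussian `N(μ, σ²I)` on `ℝ^d`:
`φ_{μ,σ}(y) = (2πσ²)^{-d/2} exp(-‖y-μ‖²/(2σ²))`. -/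
noncomputable def gaussDensity (d : ℕ) (μ : EuclideanSpace ℝ (Fin d)) (σ : ℝ)
    (y : EuclideanSpace ℝ (Fin d)) : ℝ :=
  (2 * Real.pi * σ ^ 2) ^ (-(d : ℝ) / 2) * Real.exp (-‖y - μ‖ ^ 2 / (2 * σ ^ 2))

/-- **Mean of an exponentially tilted Gaussian.**
For the tilted density `q(y) = exp(V(y)/α) φ_{μ,σ}(y) / Z` satisfying integrability
and coordinatewise vanishing-at-infinity conditions, the mean of `q` satisfies
`∫ y q(y) dy = μ + (σ²/α) ∫ ∇V(y) q(y) dy`. -/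
theorem tilted_gaussian_mean
    (d : ℕ) (hd : 1 ≤ d) (α σ : ℝ) (hα : 0 < α) (hσ : 0 < σ)
    (μ : EuclideanSpace ℝ (Fin d)) (V : EuclideanSpace ℝ (Fin d) → ℝ)
    (hV : ContDiff ℝ 1 V)
    (Z : ℝ) (hZdef : Z = ∫ y, Real.exp (V y / α) * gaussDensity d μ σ y)
    (hZint : Integrable (fun y => Real.exp (V y / α) * gaussDensity d μ σ y))
    (hZpos : 0 < Z)
    (q : EuclideanSpace ℝ (Fin d) → ℝ)
    (hq : ∀ y, q y = Real.exp (V y / α) * gaussDensity d μ σ y / Z)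
    (hint1 : ∀ j : Fin d, Integrable (fun y : EuclideanSpace ℝ (Fin d) => y j * q y))
    (hint2 : ∀ j : Fin d, Integrable (fun y : EuclideanSpace ℝ (Fin d) =>
      fderiv ℝ V y (EuclideanSpace.single j (1 : ℝ)) * q y))
    (hint3 : ∀ j : Fin d, Integrable (fun y : EuclideanSpace ℝ (Fin d) =>
      fderiv ℝ q y (EuclideanSpace.single j (1 : ℝ))))
    (htail : ∀ j : Fin d, ∀ᵐ y : EuclideanSpace ℝ (Fin d),
      Tendsto (fun r : ℝ => q (WithLp.toLp 2 (Function.update y j r))) atTop (nhds 0) ∧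
      Tendsto (fun r : ℝ => q (WithLp.toLp 2 (Function.update y j r))) atBot (nhds 0)) :
    (∫ y, q y • y) = μ + (σ ^ 2 / α) • ∫ y, q y • gradient V y := by
  classical
  obtain ⟨n, rfl⟩ : ∃ n, d = n + 1 := ⟨d - 1, (Nat.succ_pred_eq_of_pos hd).symm⟩
  have hσ2 : (σ : ℝ) ^ 2 ≠ 0 := pow_ne_zero _ hσ.ne'
  have hα' : α ≠ 0 := hα.ne'
  set c : ℝ := (2 * Real.pi * σ ^ 2) ^ (-((n + 1 : ℕ) : ℝ) / 2) / Z with hc_def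
  set W : EuclideanSpace ℝ (Fin (n + 1)) → ℝ :=
    fun y => α⁻¹ * V y + -(2 * σ ^ 2)⁻¹ * ‖y - μ‖ ^ 2 with hW_def
  set D : EuclideanSpace ℝ (Fin (n + 1)) → (EuclideanSpace ℝ (Fin (n + 1)) →L[ℝ] ℝ) :=
    fun y => α⁻¹ • fderiv ℝ V y + (-(σ ^ 2)⁻¹) • innerSL ℝ (y - μ) with hD_def
  have hqW : q = fun y => c * Real.exp (W y) := by
    funext y
    simp only [hq y, gaussDensity, hW_def, hc_def]
    rw [show α⁻¹ * V y + -(2 * σ ^ 2)⁻¹ * ‖y - μ‖ ^ 2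
        = V y / α + -‖y - μ‖ ^ 2 / (2 * σ ^ 2) by ring]
    rw [Real.exp_add]
    ring
  have hVd : ∀ y, HasFDerivAt V (fderiv ℝ V y) y :=
    fun y => (hV.differentiable one_ne_zero y).hasFDerivAt
  have hsq : ∀ y : EuclideanSpace ℝ (Fin (n + 1)),
      HasFDerivAt (fun z : EuclideanSpace ℝ (Fin (n + 1)) => ‖z - μ‖ ^ 2)
        ((2 : ℝ) • innerSL ℝ (y - μ)) y := by
    intro y
    have h := ((hasFDerivAt_id y).sub_const μ).norm_sq
    refine h.congr_fderiv ?_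
    ext v
    simp [two_smul]
  have hWd : ∀ y, HasFDerivAt W (D y) y := by
    intro y
    have h := ((hVd y).const_mul α⁻¹).add ((hsq y).const_mul (-(2 * σ ^ 2)⁻¹))
    have h2 : (-(2 * σ ^ 2)⁻¹) • ((2 : ℝ) • innerSL ℝ (y - μ))
        = (-(σ ^ 2)⁻¹) • innerSL ℝ (y - μ) := by
      rw [smul_smul]
      congr 1
      field_simp
    rw [h2] at h
    exact h
  have hqd : ∀ y, HasFDerivAt q ((q y) • D y) y := by
    intro y
    rw [hqW]
    have h := ((hWd y).exp).const_mul c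
    simpa [smul_smul, mul_assoc] using h
  have hqDiff : ∀ y, HasFDerivAt q (fderiv ℝ q y) y :=
    fun y => (hqd y).differentiableAt.hasFDerivAt
  have hqdj : ∀ (j : Fin (n + 1)) (y : EuclideanSpace ℝ (Fin (n + 1))),
      fderiv ℝ q y (EuclideanSpace.single j (1 : ℝ))
        = (α⁻¹ * fderiv ℝ V y (EuclideanSpace.single j (1 : ℝ))
            - (σ ^ 2)⁻¹ * (y j - μ j)) * q y := by
    intro j y
    rw [(hqd y).fderiv]
    have hin : (innerSL ℝ (y - μ)) (EuclideanSpace.single j (1 : ℝ)) = y j - μ j := by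
      rw [innerSL_apply_apply, EuclideanSpace.inner_single_right]
      simp
    simp only [hD_def, ContinuousLinearMap.smul_apply, ContinuousLinearMap.add_apply,
      smul_eq_mul, hin]
    ring
  have hqfun : q = fun y => Real.exp (V y / α) * gaussDensity (n + 1) μ σ y / Z := funext hq
  have hqInt : Integrable q := by rw [hqfun]; exact hZint.div_const Z
  have hq1 : ∫ y, q y = 1 := by
    rw [hqfun, integral_div, ← hZdef, div_self hZpos.ne']
  have hcurve : ∀ (j : Fin (n + 1)) (y : EuclideanSpace ℝ (Fin (n + 1))) (s : ℝ),
      WithLp.toLp 2 (Function.update y j s) = y + (s - y j) • EuclideanSpace.single j (1 : ℝ) := by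
    intro j y s
    ext k
    by_cases hk : k = j
    · subst hk
      simp [Function.update_apply, PiLp.add_apply, PiLp.smul_apply,
        EuclideanSpace.single_apply]
    · simp [Function.update_apply, hk, PiLp.add_apply, PiLp.smul_apply,
        EuclideanSpace.single_apply]
  have hderivq : ∀ (j : Fin (n + 1)) (y : EuclideanSpace ℝ (Fin (n + 1))) (r : ℝ),
      HasDerivAt (fun s => q (WithLp.toLp 2 (Function.update y j s)))
        (fderiv ℝ q (WithLp.toLp 2 (Function.update y j r)) (EuclideanSpace.single j (1 : ℝ))) r := by
    intro j y r
    have hc : HasDerivAt (fun s : ℝ => y + (s - y j) • EuclideanSpace.single j (1 : ℝ))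
        (EuclideanSpace.single j (1 : ℝ)) r := by
      simpa using
        (((hasDerivAt_id r).sub_const (y j)).smul_const
          (EuclideanSpace.single j (1 : ℝ))).const_add y
    have hcomp :=
      (hqDiff (y + (r - y j) • EuclideanSpace.single j (1 : ℝ))).comp_hasDerivAt r hc
    simpa only [← hcurve j y, Function.comp_def] using hcomp
  have key : ∀ j : Fin (n + 1),
      (∫ y, y j * q y)
        = μ j + (σ ^ 2 / α) * ∫ y, fderiv ℝ V y (EuclideanSpace.single j (1 : ℝ)) * q y := by
    intro j
    have hzero := aux_integral_fderiv_zero j q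
      (fun y => fderiv ℝ q y (EuclideanSpace.single j (1 : ℝ)))
      (hderivq j) (hint3 j) (htail j)
    have hrepr : (fun y : EuclideanSpace ℝ (Fin (n + 1)) =>
          fderiv ℝ q y (EuclideanSpace.single j (1 : ℝ)))
        = fun y => (α⁻¹ * (fderiv ℝ V y (EuclideanSpace.single j (1 : ℝ)) * q y)
            - (σ ^ 2)⁻¹ * (y j * q y)) + ((σ ^ 2)⁻¹ * μ j) * q y := by
      funext y
      rw [hqdj j y]
      ring
    have hsubInt : Integrable (fun y : EuclideanSpace ℝ (Fin (n + 1)) =>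
        α⁻¹ * (fderiv ℝ V y (EuclideanSpace.single j (1 : ℝ)) * q y)
          - (σ ^ 2)⁻¹ * (y j * q y)) :=
      ((hint2 j).const_mul _).sub ((hint1 j).const_mul _)
    rw [hrepr] at hzero
    rw [integral_add hsubInt
      (hqInt.const_mul _), integral_sub ((hint2 j).const_mul _) ((hint1 j).const_mul _),
      integral_const_mul, integral_const_mul, integral_const_mul, hq1] at hzero
    have hmul : α * σ ^ 2 ≠ 0 := mul_ne_zero hα' hσ2
    field_simp at hzero
    apply mul_left_cancel₀ hmul
    field_simp
    linear_combination (-1 : ℝ) * hzero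
  -- integrability of the vector-valued integrands
  have hnorm_le : ∀ v : EuclideanSpace ℝ (Fin (n + 1)), ‖v‖ ≤ ∑ k, |v k| := by
    intro v
    rw [EuclideanSpace.norm_eq]
    rw [show (∑ k, |v k|) = Real.sqrt ((∑ k, |v k|) ^ 2) from
      (Real.sqrt_sq (Finset.sum_nonneg fun _ _ => abs_nonneg _)).symm]
    apply Real.sqrt_le_sqrt
    calc ∑ k, ‖v k‖ ^ 2 = ∑ k, |v k| ^ 2 := by simp [Real.norm_eq_abs]
      _ ≤ (∑ k, |v k|) ^ 2 := Finset.sum_sq_le_sq_sum_of_nonneg fun _ _ => abs_nonneg _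
  have hqDiffAll : Differentiable ℝ q := fun y => (hqd y).differentiableAt
  have hqCont : Continuous q := hqDiffAll.continuous
  have hVfderivCont : Continuous fun y => fderiv ℝ V y := hV.continuous_fderiv one_ne_zero
  have hgradCont : Continuous fun y : EuclideanSpace ℝ (Fin (n + 1)) => gradient V y := by
    show Continuous fun y => (InnerProductSpace.toDual ℝ _).symm (fderiv ℝ V y)
    exact (InnerProductSpace.toDual ℝ _).symm.continuous.comp hVfderivCont
  have hgrad_apply : ∀ (y : EuclideanSpace ℝ (Fin (n + 1))) (j : Fin (n + 1)),
      gradient V y j = fderiv ℝ V y (EuclideanSpace.single j (1 : ℝ)) := by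
    intro y j
    have h1 : gradient V y j
        = inner (𝕜 := ℝ) (gradient V y) (EuclideanSpace.single j (1 : ℝ)) := by
      rw [EuclideanSpace.inner_single_right]; simp
    rw [h1]
    exact InnerProductSpace.toDual_symm_apply
  have hIvInt : Integrable (fun y : EuclideanSpace ℝ (Fin (n + 1)) => q y • y) := by
    refine Integrable.mono' (integrable_finset_sum Finset.univ fun k _ => (hint1 k).abs)
      ((hqCont.smul continuous_id).aestronglyMeasurable) ?_
    filter_upwards with y
    rw [norm_smul]
    calc ‖q y‖ * ‖y‖ ≤ |q y| * ∑ k, |y k| := by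
          rw [Real.norm_eq_abs]
          exact mul_le_mul_of_nonneg_left (hnorm_le y) (abs_nonneg _)
      _ = ∑ k, |y k * q y| := by
          rw [Finset.mul_sum]
          exact Finset.sum_congr rfl fun k _ => by rw [abs_mul, mul_comm]
  have hGvInt : Integrable (fun y : EuclideanSpace ℝ (Fin (n + 1)) => q y • gradient V y) := by
    refine Integrable.mono' (integrable_finset_sum Finset.univ fun k _ => (hint2 k).abs)
      ((hqCont.smul hgradCont).aestronglyMeasurable) ?_
    filter_upwards with y
    rw [norm_smul]
    calc ‖q y‖ * ‖gradient V y‖ ≤ |q y| * ∑ k, |gradient V y k| := by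
          rw [Real.norm_eq_abs]
          exact mul_le_mul_of_nonneg_left (hnorm_le _) (abs_nonneg _)
      _ = ∑ k, |fderiv ℝ V y (EuclideanSpace.single k 1) * q y| := by
          rw [Finset.mul_sum]
          exact Finset.sum_congr rfl fun k _ => by rw [hgrad_apply, abs_mul, mul_comm]
  -- conclude coordinatewise
  refine PiLp.ext fun j => ?_
  have e1 : (∫ y, q y • y) j = ∫ y, y j * q y := by
    have h := (ContinuousLinearMap.integral_comp_comm (EuclideanSpace.proj j) hIvInt).symm
    simp only [PiLp.proj_apply, PiLp.smul_apply, smul_eq_mul] at h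
    rw [h]
    exact integral_congr_ae (Filter.Eventually.of_forall fun y => mul_comm _ _)
  have e2 : (∫ y, q y • gradient V y) j
      = ∫ y, fderiv ℝ V y (EuclideanSpace.single j (1 : ℝ)) * q y := by
    have h := (ContinuousLinearMap.integral_comp_comm (EuclideanSpace.proj j) hGvInt).symm
    simp only [PiLp.proj_apply, PiLp.smul_apply, smul_eq_mul] at h
    rw [h]
    refine integral_congr_ae (Filter.Eventually.of_forall fun y => ?_)
    show q y * gradient V y j = fderiv ℝ V y (EuclideanSpace.single j 1) * q y
    rw [hgrad_apply, mul_comm]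
  rw [e1, key j, PiLp.add_apply, PiLp.smul_apply, smul_eq_mul, e2]
end

section
/- Let d ≥ 1, α > 0, σ > 0, κ ∈ ℝ, Ω ∈ ℝ with Ω ≠ 0, fix x ∈ ℝ^d and s_ref ∈ ℝ^d, and set μ_ref := κ x + Ω s_ref. Let V : ℝ^d → ℝ be continuously differentiable, suppose Z := ∫_{ℝ^d} exp(V(y)/α) φ_{μ_ref,σ}(y) dy is finite and positive, and define the tilted density q(y) := exp(V(y)/α) φ_{μ_ref,σ}(y) / Z. Assume that y ↦ y_j q(y), y ↦ ∂_j V(y) q(y), and y ↦ ∂_j q(y) are Lebesgue integrable for every coordinate j, and that for every j and almost every fixed choice of the remaining coordinates, q(y) → 0 as y_j → ±∞. Then the unique vector Ψ⋆ ∈ ℝ^d satisfying κ x + Ω (s_ref + Ψ⋆) = ∫_{ℝ^d} y q(y) dy is Ψ⋆ = (σ²/(α Ω)) ∫_{ℝ^d} ∇V(y) q(y) dy. (Optimal value guidance: the Gaussian kernel with mean κx + Ω(s_ref + Ψ) matches the mean of the exponentially tilted reference kernel exactly for this Ψ⋆.) -/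
open MeasureTheory Filter

lemma update_eq_add_smul {m : ℕ} (y : EuclideanSpace ℝ (Fin m)) (j : Fin m) (r : ℝ) :
    WithLp.toLp 2 (Function.update y j r) = y + (r - y j) • EuclideanSpace.single j (1:ℝ) := by
  ext i
  by_cases h : i = j
  · subst h; simp [PiLp.add_apply, PiLp.smul_apply, EuclideanSpace.single_apply]
  · simp [Function.update_of_ne h, PiLp.add_apply, PiLp.smul_apply, EuclideanSpace.single_apply, h]

lemma integral_fderiv_single_eq_zero {n : ℕ} (f : EuclideanSpace ℝ (Fin (n+1)) → ℝ)
    (hf : Differentiable ℝ f) (j : Fin (n+1))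
    (hint : Integrable (fun y => fderiv ℝ f y (EuclideanSpace.single j (1:ℝ))))
    (htail : ∀ᵐ y : EuclideanSpace ℝ (Fin (n+1)),
      Tendsto (fun r : ℝ => f (WithLp.toLp 2 (Function.update y j r))) atTop (nhds 0) ∧
      Tendsto (fun r : ℝ => f (WithLp.toLp 2 (Function.update y j r))) atBot (nhds 0)) :
    ∫ y, fderiv ℝ f y (EuclideanSpace.single j (1:ℝ)) = 0 := by
  classical
  set e1 : (Fin (n+1) → ℝ) ≃ᵐ ℝ × (Fin n → ℝ) := MeasurableEquiv.piFinSuccAbove (fun _ => ℝ) j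
  set Φ : ℝ × (Fin n → ℝ) ≃ᵐ EuclideanSpace ℝ (Fin (n+1)) :=
    e1.symm.trans (MeasurableEquiv.toLp 2 (Fin (n+1) → ℝ))
  have hΦ : MeasurePreserving Φ volume volume := by
    have h1 : MeasurePreserving e1.symm volume volume :=
      (volume_preserving_piFinSuccAbove (fun _ => ℝ) j).symm
    have h2 : MeasurePreserving (MeasurableEquiv.toLp 2 (Fin (n+1) → ℝ)) volume volume :=
      (EuclideanSpace.volume_preserving_symm_measurableEquiv_toLp (Fin (n+1))).symm
    exact h2.comp h1
  -- slice identity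
  have hup : ∀ (z : Fin n → ℝ) (r s : ℝ),
      WithLp.toLp 2 (Function.update (Φ (r, z)) j s) = Φ (s, z) := by
    intro z r s
    ext i
    show Function.update (Φ (r,z)).ofLp j s i = _
    rcases eq_or_ne i j with rfl | h
    · simp [Φ, e1, MeasurableEquiv.coe_toLp]
    · obtain ⟨k, hk⟩ := Fin.exists_succAbove_eq h
      subst hk
      simp [Function.update_of_ne h, Φ, e1, MeasurableEquiv.coe_toLp]
  set F : EuclideanSpace ℝ (Fin (n+1)) → ℝ := fun y => fderiv ℝ f y (EuclideanSpace.single j (1:ℝ)) with hF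
  have hcomp : ∫ y, F y = ∫ p : ℝ × (Fin n → ℝ), F (Φ p) := (hΦ.integral_comp' F).symm
  have hintc : Integrable (fun p : ℝ × (Fin n → ℝ) => F (Φ p)) volume := by
    simpa [Function.comp_def] using (hΦ.integrable_comp_emb Φ.measurableEmbedding).mpr hint
  rw [hcomp]
  rw [Measure.volume_eq_prod] at hintc ⊢
  rw [integral_prod_symm _ hintc]
  -- the tail condition transferred
  have htail2 : ∀ᵐ z : Fin n → ℝ,
      Tendsto (fun s : ℝ => f (Φ (s, z))) atTop (nhds 0) ∧
      Tendsto (fun s : ℝ => f (Φ (s, z))) atBot (nhds 0) := by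
    have h1 : ∀ᵐ p : ℝ × (Fin n → ℝ) ∂(volume : Measure ℝ).prod volume,
        Tendsto (fun s : ℝ => f (Φ (s, p.2))) atTop (nhds 0) ∧
        Tendsto (fun s : ℝ => f (Φ (s, p.2))) atBot (nhds 0) := by
      have := hΦ.quasiMeasurePreserving.ae htail
      rw [Measure.volume_eq_prod] at this
      filter_upwards [this] with p hp
      have he : (fun s : ℝ => f (Φ (s, p.2))) = fun s => f (WithLp.toLp 2 (Function.update (Φ p) j s)) := by
        funext s; rw [hup p.2 p.1 s]
      rw [he]; exact hp
    have h2 := MeasureTheory.Measure.ae_ae_of_ae_prod h1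
    exact h2.exists.choose_spec
  have hslice := hintc.prod_left_ae
  have key : ∀ᵐ z : Fin n → ℝ, ∫ r : ℝ, F (Φ (r, z)) = 0 := by
    filter_upwards [htail2, hslice] with z hz hzint
    have hderiv : ∀ r : ℝ, HasDerivAt (fun s => f (Φ (s, z))) (F (Φ (r, z))) r := by
      intro r
      set y0 : EuclideanSpace ℝ (Fin (n+1)) := Φ (r, z) with hy0
      have hline : HasDerivAt (fun s : ℝ => y0 + (s - y0 j) • EuclideanSpace.single j (1:ℝ))
          (EuclideanSpace.single j (1:ℝ)) r := by
        have h1 : HasDerivAt (fun s : ℝ => s - y0 j) 1 r := (hasDerivAt_id r).sub_const _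
        simpa using (h1.smul_const (EuclideanSpace.single j (1:ℝ))).const_add y0
      have hcompd := (hf _).hasFDerivAt.comp_hasDerivAt r hline
      have heq : (fun s : ℝ => f (y0 + (s - y0 j) • EuclideanSpace.single j (1:ℝ)))
          = fun s => f (Φ (s, z)) := by
        funext s
        rw [← update_eq_add_smul y0 j s, hy0, hup z r s]
      have heq2 : y0 + (r - y0 j) • EuclideanSpace.single j (1:ℝ) = y0 := by
        rw [← update_eq_add_smul y0 j r, hy0, hup z r r]
      simp only [Function.comp_def] at hcompd
      rw [heq, heq2] at hcompd
      exact hcompd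
    have := integral_of_hasDerivAt_of_tendsto hderiv hzint hz.2 hz.1
    simpa using this
  calc ∫ z : Fin n → ℝ, ∫ r : ℝ, F (Φ (r, z)) = ∫ z : Fin n → ℝ, (0:ℝ) :=
        integral_congr_ae key
    _ = 0 := integral_zero _ _

/-- **Optimal value guidance.**
With reference mean `μ_ref = κ x + Ω s_ref` and tilted density
`q(y) = exp(V(y)/α) φ_{μ_ref,σ}(y)/Z`, the unique vector `Ψ⋆` with
`κ x + Ω(s_ref + Ψ⋆) = ∫ y q(y) dy` is `Ψ⋆ = (σ²/(αΩ)) ∫ ∇V(y) q(y) dy`. -/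
theorem optimal_value_guidance
    (d : ℕ) (hd : 1 ≤ d) (α σ κ Ω : ℝ) (hα : 0 < α) (hσ : 0 < σ) (hΩ : Ω ≠ 0)
    (x sref : EuclideanSpace ℝ (Fin d))
    (μref : EuclideanSpace ℝ (Fin d)) (hμref : μref = κ • x + Ω • sref)
    (V : EuclideanSpace ℝ (Fin d) → ℝ) (hV : ContDiff ℝ 1 V)
    (Z : ℝ) (hZdef : Z = ∫ y, Real.exp (V y / α) * gaussDensity d μref σ y)
    (hZint : Integrable (fun y => Real.exp (V y / α) * gaussDensity d μref σ y))
    (hZpos : 0 < Z)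
    (q : EuclideanSpace ℝ (Fin d) → ℝ)
    (hq : ∀ y, q y = Real.exp (V y / α) * gaussDensity d μref σ y / Z)
    (hint1 : ∀ j : Fin d, Integrable (fun y : EuclideanSpace ℝ (Fin d) => y j * q y))
    (hint2 : ∀ j : Fin d, Integrable (fun y : EuclideanSpace ℝ (Fin d) =>
      fderiv ℝ V y (EuclideanSpace.single j (1 : ℝ)) * q y))
    (hint3 : ∀ j : Fin d, Integrable (fun y : EuclideanSpace ℝ (Fin d) =>
      fderiv ℝ q y (EuclideanSpace.single j (1 : ℝ))))
    (htail : ∀ j : Fin d, ∀ᵐ y : EuclideanSpace ℝ (Fin d),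
      Tendsto (fun r : ℝ => q (WithLp.toLp 2 (Function.update y j r))) atTop (nhds 0) ∧
      Tendsto (fun r : ℝ => q (WithLp.toLp 2 (Function.update y j r))) atBot (nhds 0)) :
    ∀ Ψ : EuclideanSpace ℝ (Fin d),
      κ • x + Ω • (sref + Ψ) = (∫ y, q y • y) ↔
      Ψ = (σ ^ 2 / (α * Ω)) • ∫ y, q y • gradient V y := by
  classical
  obtain ⟨n, rfl⟩ : ∃ n, d = n + 1 := ⟨d - 1, by omega⟩
  have hZ : Z ≠ 0 := ne_of_gt hZpos
  have hα' : α ≠ 0 := ne_of_gt hα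
  have hσ2 : σ ^ 2 ≠ 0 := pow_ne_zero 2 (ne_of_gt hσ)
  -- basic facts about q
  have hqint : Integrable q := by
    have h0 : Integrable (fun y => Real.exp (V y / α) * gaussDensity (n+1) μref σ y / Z) :=
      hZint.div_const Z
    exact h0.congr (Filter.Eventually.of_forall fun y => (hq y).symm)
  have hqone : ∫ y, q y = 1 := by
    have : (fun y => q y) = fun y => Real.exp (V y / α) * gaussDensity (n+1) μref σ y / Z :=
      funext hq
    rw [this, integral_div, ← hZdef, div_self hZ]
  -- derivative of q
  set c : ℝ := (2 * Real.pi * σ ^ 2) ^ (-((n+1) : ℝ) / 2) / Z with hc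
  set g : EuclideanSpace ℝ (Fin (n+1)) → ℝ :=
    fun y => V y / α + (-‖y - μref‖ ^ 2 / (2 * σ ^ 2)) with hg
  have hqg : q = fun y => Real.exp (g y) * c := by
    funext y
    rw [hq y, gaussDensity, hg]
    simp only []
    rw [Real.exp_add]
    push_cast
    ring
  have hgd : ∀ y : EuclideanSpace ℝ (Fin (n+1)), HasFDerivAt g
      (α⁻¹ • fderiv ℝ V y + (-(2 * σ ^ 2)⁻¹) • (2 • ((innerSL ℝ (y - μref)).comp
        (ContinuousLinearMap.id ℝ (EuclideanSpace ℝ (Fin (n+1))))))) y := by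
    intro y
    have h1 : HasFDerivAt (fun y : EuclideanSpace ℝ (Fin (n+1)) => V y / α)
        (α⁻¹ • fderiv ℝ V y) y := by
      simpa [div_eq_inv_mul] using
        ((hV.differentiable one_ne_zero y).hasFDerivAt).const_mul α⁻¹
    have h2 : HasFDerivAt (fun y : EuclideanSpace ℝ (Fin (n+1)) => ‖y - μref‖ ^ 2)
        (2 • ((innerSL ℝ (y - μref)).comp (ContinuousLinearMap.id ℝ _))) y :=
      ((hasFDerivAt_id y).sub_const μref).norm_sq
    have h3 := h2.const_mul (-(2 * σ ^ 2)⁻¹)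
    have heq : (fun y : EuclideanSpace ℝ (Fin (n+1)) => -‖y - μref‖ ^ 2 / (2 * σ ^ 2))
        = fun y => (-(2 * σ ^ 2)⁻¹) * ‖y - μref‖ ^ 2 := by
      funext y; field_simp
    exact h1.add (heq ▸ h3)
  have hqd : ∀ y : EuclideanSpace ℝ (Fin (n+1)), HasFDerivAt q
      (c • (Real.exp (g y) • (α⁻¹ • fderiv ℝ V y + (-(2 * σ ^ 2)⁻¹) •
        (2 • ((innerSL ℝ (y - μref)).comp
        (ContinuousLinearMap.id ℝ (EuclideanSpace ℝ (Fin (n+1))))))))) y := by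
    intro y
    have := ((hgd y).exp).mul_const c
    rw [hqg]
    exact this
  have hdiffq : Differentiable ℝ q := fun y => (hqd y).differentiableAt
  have hform : ∀ (y : EuclideanSpace ℝ (Fin (n+1))) (j : Fin (n+1)),
      fderiv ℝ q y (EuclideanSpace.single j (1:ℝ)) =
        q y * (fderiv ℝ V y (EuclideanSpace.single j (1:ℝ)) / α - (y j - μref j) / σ ^ 2) := by
    intro y j
    rw [(hqd y).fderiv]
    have hy : q y = Real.exp (g y) * c := by rw [hqg]
    rw [hy]
    simp only [ContinuousLinearMap.smul_apply, ContinuousLinearMap.add_apply,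
      ContinuousLinearMap.comp_apply, ContinuousLinearMap.coe_id', id_eq, innerSL_apply_apply,
      smul_eq_mul]
    have hinner : (inner ℝ (y - μref) (EuclideanSpace.single j (1:ℝ)) : ℝ) = y j - μref j := by
      rw [EuclideanSpace.inner_single_right]
      simp [PiLp.sub_apply]
    rw [hinner]
    field_simp
    ring
  -- the zero-integral fact
  have hzero : ∀ j : Fin (n+1),
      ∫ y, fderiv ℝ q y (EuclideanSpace.single j (1:ℝ)) = 0 := fun j =>
    integral_fderiv_single_eq_zero q hdiffq j (hint3 j) (htail j)
  -- the scalar identity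
  have hIj : ∀ j : Fin (n+1), ∫ y, y j * q y
      = μref j + (σ ^ 2 / α) * ∫ y, fderiv ℝ V y (EuclideanSpace.single j (1:ℝ)) * q y := by
    intro j
    have heq : (fun y : EuclideanSpace ℝ (Fin (n+1)) => y j * q y)
        = fun y => (μref j * q y
            + (σ ^ 2 / α) * (fderiv ℝ V y (EuclideanSpace.single j (1:ℝ)) * q y))
            - σ ^ 2 * fderiv ℝ q y (EuclideanSpace.single j (1:ℝ)) := by
      funext y
      rw [hform y j]
      field_simp
      ring
    have h1 : Integrable (fun y : EuclideanSpace ℝ (Fin (n+1)) => μref j * q y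
        + (σ ^ 2 / α) * (fderiv ℝ V y (EuclideanSpace.single j (1:ℝ)) * q y)) := by
      exact (hqint.const_mul _).add ((hint2 j).const_mul _)
    rw [heq, integral_sub h1 ((hint3 j).const_mul _),
      integral_add (hqint.const_mul _) ((hint2 j).const_mul _),
      integral_const_mul, integral_const_mul, integral_const_mul, hqone, hzero j]
    ring
  -- coordinates of the gradient
  have hgrad : ∀ (y : EuclideanSpace ℝ (Fin (n+1))) (j : Fin (n+1)),
      gradient V y j = fderiv ℝ V y (EuclideanSpace.single j (1:ℝ)) := by
    intro y j
    have h1 : fderiv ℝ V y = (InnerProductSpace.toDual ℝ _) (gradient V y) :=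
      ((InnerProductSpace.toDual ℝ _).apply_symm_apply _).symm
    rw [h1, InnerProductSpace.toDual_apply_apply, EuclideanSpace.inner_single_right]
    simp
  -- vector integral expansions
  have hI : (∫ y, q y • y)
      = ∑ j : Fin (n+1), (∫ y, y j * q y) • EuclideanSpace.single j (1:ℝ) := by
    have hvec : (fun y : EuclideanSpace ℝ (Fin (n+1)) => q y • y)
        = fun y => ∑ j : Fin (n+1), (y j * q y) • EuclideanSpace.single j (1:ℝ) := by
      funext y
      ext i
      simp only [PiLp.smul_apply, smul_eq_mul]
      rw [show (∑ j : Fin (n+1), (y j * q y) • EuclideanSpace.single j (1:ℝ)) i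
          = ∑ j : Fin (n+1), ((y j * q y) • EuclideanSpace.single j (1:ℝ)) i from
          (congrFun (WithLp.ofLp_sum _ _ _ _) i).trans (Finset.sum_apply i _ _)]
      simp [PiLp.smul_apply, EuclideanSpace.single_apply, mul_comm]
    rw [hvec, integral_finset_sum _ (fun j _ => (hint1 j).smul_const _)]
    exact Finset.sum_congr rfl fun j _ => integral_smul_const _ _
  have hG : (∫ y, q y • gradient V y)
      = ∑ j : Fin (n+1), (∫ y, fderiv ℝ V y (EuclideanSpace.single j (1:ℝ)) * q y)
          • EuclideanSpace.single j (1:ℝ) := by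
    have hvec : (fun y : EuclideanSpace ℝ (Fin (n+1)) => q y • gradient V y)
        = fun y => ∑ j : Fin (n+1),
            (fderiv ℝ V y (EuclideanSpace.single j (1:ℝ)) * q y) • EuclideanSpace.single j (1:ℝ) := by
      funext y
      ext i
      simp only [PiLp.smul_apply, smul_eq_mul]
      rw [show (∑ j : Fin (n+1), (fderiv ℝ V y (EuclideanSpace.single j (1:ℝ)) * q y)
            • EuclideanSpace.single j (1:ℝ)) i
          = ∑ j : Fin (n+1), ((fderiv ℝ V y (EuclideanSpace.single j (1:ℝ)) * q y)
            • EuclideanSpace.single j (1:ℝ)) i from (congrFun (WithLp.ofLp_sum _ _ _ _) i).trans (Finset.sum_apply i _ _)]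
      simp [PiLp.smul_apply, EuclideanSpace.single_apply, hgrad y i, mul_comm]
    rw [hvec, integral_finset_sum _ (fun j _ => (hint2 j).smul_const _)]
    exact Finset.sum_congr rfl fun j _ => integral_smul_const _ _
  -- μref expansion
  have hμexp : μref = ∑ j : Fin (n+1), μref j • EuclideanSpace.single j (1:ℝ) := by
    ext i
    rw [show (∑ j : Fin (n+1), μref j • EuclideanSpace.single j (1:ℝ)) i
        = ∑ j : Fin (n+1), (μref j • EuclideanSpace.single j (1:ℝ)) i from (congrFun (WithLp.ofLp_sum _ _ _ _) i).trans (Finset.sum_apply i _ _)]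
    simp [PiLp.smul_apply, EuclideanSpace.single_apply]
  -- key identity
  have key : (∫ y, q y • y) = μref + (σ ^ 2 / α) • ∫ y, q y • gradient V y := by
    rw [hI, hG, Finset.smul_sum]
    rw [hμexp, ← Finset.sum_add_distrib]
    refine Finset.sum_congr rfl fun j _ => ?_
    rw [hIj j, add_smul, smul_smul]
  -- final algebra
  intro Ψ
  set G : EuclideanSpace ℝ (Fin (n+1)) := ∫ y, q y • gradient V y with hG'
  have hLHS : κ • x + Ω • (sref + Ψ) = μref + Ω • Ψ := by
    rw [hμref, smul_add, add_assoc]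
  rw [hLHS, key]
  constructor
  · intro h
    have h2 : Ω • Ψ = (σ ^ 2 / α) • G := add_left_cancel h
    rw [show σ ^ 2 / (α * Ω) = Ω⁻¹ * (σ ^ 2 / α) by field_simp,
      ← smul_smul, ← h2, smul_smul, inv_mul_cancel₀ hΩ, one_smul]
  · intro h
    rw [h]
    congr 1
    rw [smul_smul]
    congr 1
    field_simp
end

section
/- Let d ≥ 1, α > 0, σ > 0, κ ∈ ℝ, Ω ∈ ℝ with Ω ≠ 0, fix x ∈ ℝ^d and s_ref ∈ ℝ^d, and set μ_ref := κ x + Ω s_ref. Let V : ℝ^d → ℝ be continuously differentiable, suppose Z := ∫_{ℝ^d} exp(V(y)/α) φ_{μ_ref,σ}(y) dy is finite and positive, and define the tilted density q(y) := exp(V(y)/α) φ_{μ_ref,σ}(y) / Z, assuming the integrability and coordinatewise vanishing-at-infinity conditions: y ↦ y_j q(y), y ↦ ∂_j V(y) q(y), and y ↦ ∂_j q(y) are Lebesgue integrable for every j, and q(y) → 0 as y_j → ±∞ for almost every fixed choice of remaining coordinates. Suppose further that the value gradient admits the exact decomposition ∇V(y) = γ ∇r̂(y) + g(y) for all y ∈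 ℝ^d, where γ ∈ ℝ, r̂ : ℝ^d → ℝ is differentiable and g : ℝ^d → ℝ^d. Then the residual-corrected first-order estimator Ψ̂ := (σ²/(α Ω)) ∫_{ℝ^d} (γ ∇r̂(y) + g(y)) q(y) dy exactly matches the mean of the tilted kernel: κ x + Ω (s_ref + Ψ̂) = ∫_{ℝ^d} y q(y) dy. (Conditional consistency of the residual-corrected first-order lookahead estimator.) -/
open MeasureTheory Filter

section Aux

/-- Coordinates of the gradient are directional derivatives. -/
lemma gradient_coord {d : ℕ} (f : EuclideanSpace ℝ (Fin d) → ℝ) (y : EuclideanSpace ℝ (Fin d))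
    (i : Fin d) : gradient f y i = fderiv ℝ f y (EuclideanSpace.single i 1) := by
  have h : gradient f y i = @inner ℝ _ _ (gradient f y) (EuclideanSpace.single i (1:ℝ)) := by
    rw [EuclideanSpace.inner_single_right]; simp
  rw [h, gradient, InnerProductSpace.toDual_symm_apply]

/-- The integral of a partial derivative over `ℝ^{m+1}` vanishes, given integrability of the
partial derivative and vanishing at infinity along the corresponding coordinate. -/
lemma integral_partial_deriv_eq_zero (m : ℕ) (j : Fin (m+1))
    (q : EuclideanSpace ℝ (Fin (m+1)) → ℝ)
    (hqD : ∀ y, DifferentiableAt ℝ q y)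
    (hint3 : Integrable (fun y : EuclideanSpace ℝ (Fin (m+1)) =>
      fderiv ℝ q y (EuclideanSpace.single j (1 : ℝ))))
    (htail : ∀ᵐ y : EuclideanSpace ℝ (Fin (m+1)),
      Tendsto (fun r : ℝ => q (WithLp.toLp 2 (Function.update y j r))) atTop (nhds 0) ∧
      Tendsto (fun r : ℝ => q (WithLp.toLp 2 (Function.update y j r))) atBot (nhds 0)) :
    ∫ y, fderiv ℝ q y (EuclideanSpace.single j (1 : ℝ)) = 0 := by
  classical
  set D : EuclideanSpace ℝ (Fin (m+1)) → ℝ :=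
    fun y => fderiv ℝ q y (EuclideanSpace.single j (1 : ℝ)) with hD
  let e₁ : EuclideanSpace ℝ (Fin (m+1)) ≃ᵐ (Fin (m+1) → ℝ) :=
    (MeasurableEquiv.toLp 2 (Fin (m+1) → ℝ)).symm
  let e₂ : (Fin (m+1) → ℝ) ≃ᵐ ℝ × (Fin m → ℝ) :=
    MeasurableEquiv.piFinSuccAbove (fun _ => ℝ) j
  let Φ : ℝ × (Fin m → ℝ) ≃ᵐ EuclideanSpace ℝ (Fin (m+1)) := e₂.symm.trans e₁.symm
  have hΦpres : MeasurePreserving (⇑Φ) volume volume := by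
    have h3 : MeasurePreserving (⇑e₂.symm) volume volume :=
      (volume_preserving_piFinSuccAbove (fun _ : Fin (m+1) => ℝ) j).symm e₂
    have h4 : MeasurePreserving (⇑e₁.symm) volume volume :=
      (EuclideanSpace.volume_preserving_symm_measurableEquiv_toLp (Fin (m+1))).symm e₁
    exact h4.comp h3
  have hΦapp : ∀ (t : ℝ) (z : Fin m → ℝ) (i : Fin (m+1)),
      Φ (t, z) i = Fin.insertNth (α := fun _ => ℝ) j t z i := by
    intro t z i
    rfl
  have hupdate : ∀ (t r : ℝ) (z : Fin m → ℝ),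
      Function.update (Φ (t, z)) j r = Φ (r, z) := by
    intro t r z
    funext i
    refine Fin.succAboveCases j ?_ ?_ i
    · rw [Function.update_self]
      rw [hΦapp, Fin.insertNth_apply_same]
    · intro k
      rw [Function.update_of_ne (Fin.succAbove_ne j k)]
      rw [hΦapp, hΦapp, Fin.insertNth_apply_succAbove, Fin.insertNth_apply_succAbove]
  have hline : ∀ (t : ℝ) (z : Fin m → ℝ),
      Φ (t, z) = Φ (0, z) + t • EuclideanSpace.single j (1:ℝ) := by
    intro t z
    ext i
    have : (Φ (0, z) + t • EuclideanSpace.single j (1:ℝ)) i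
        = Φ (0, z) i + t * EuclideanSpace.single j (1:ℝ) i := rfl
    rw [this]
    refine Fin.succAboveCases j ?_ ?_ i
    · rw [hΦapp, hΦapp, Fin.insertNth_apply_same, Fin.insertNth_apply_same,
        EuclideanSpace.single_apply, if_pos rfl]
      ring
    · intro k
      rw [hΦapp, hΦapp, Fin.insertNth_apply_succAbove, Fin.insertNth_apply_succAbove,
        EuclideanSpace.single_apply, if_neg (Fin.succAbove_ne j k)]
      ring
  have hDcomp : Integrable (fun p : ℝ × (Fin m → ℝ) => D (Φ p)) volume :=
    (hΦpres.integrable_comp_emb Φ.measurableEmbedding).2 hint3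
  have hIeq : ∫ y, D y = ∫ p : ℝ × (Fin m → ℝ), D (Φ p) :=
    (hΦpres.integral_comp Φ.measurableEmbedding D).symm
  rw [hIeq]
  rw [Measure.volume_eq_prod] at hDcomp ⊢
  rw [integral_prod_symm _ hDcomp]
  have hslice : ∀ᵐ z : Fin m → ℝ, Integrable (fun t => D (Φ (t, z))) volume :=
    hDcomp.prod_left_ae
  have htail2 : ∀ᵐ z : Fin m → ℝ,
      Tendsto (fun r : ℝ => q (Φ (r, z))) atTop (nhds 0) ∧
      Tendsto (fun r : ℝ => q (Φ (r, z))) atBot (nhds 0) := by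
    have h1 : ∀ᵐ p : ℝ × (Fin m → ℝ) ∂((volume : Measure ℝ).prod volume),
        Tendsto (fun r : ℝ => q (Φ (r, p.2))) atTop (nhds 0) ∧
        Tendsto (fun r : ℝ => q (Φ (r, p.2))) atBot (nhds 0) := by
      have h0 := hΦpres.quasiMeasurePreserving.ae htail
      rw [Measure.volume_eq_prod] at h0
      filter_upwards [h0] with p hp
      have : (fun r : ℝ => q (WithLp.toLp 2 (Function.update (Φ p) j r)))
          = fun r : ℝ => q (Φ (r, p.2)) := by
        funext r; rw [show Φ p = Φ (p.1, p.2) from rfl, hupdate, WithLp.toLp_ofLp]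
      rwa [this] at hp
    have h2 := (Measure.measurePreserving_swap.quasiMeasurePreserving.ae h1 :
      ∀ᵐ p : (Fin m → ℝ) × ℝ ∂((volume : Measure (Fin m → ℝ)).prod volume), _)
    have h3 := Measure.ae_ae_of_ae_prod h2
    filter_upwards [h3] with z hz
    exact hz.exists.choose_spec
  have hzero : ∀ᵐ z : Fin m → ℝ, (∫ t, D (Φ (t, z))) = 0 := by
    filter_upwards [hslice, htail2] with z hz htz
    have hder : ∀ t : ℝ, HasDerivAt (fun r => q (Φ (r, z))) (D (Φ (t, z))) t := by
      intro t
      have hl : HasDerivAt (fun r : ℝ => Φ (0, z) + r • EuclideanSpace.single j (1:ℝ))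
          (EuclideanSpace.single j (1:ℝ)) t := by
        simpa using
          ((hasDerivAt_id t).smul_const (EuclideanSpace.single j (1:ℝ))).const_add (Φ (0,z))
      have hcomp :=
        ((hqD (Φ (0, z) + t • EuclideanSpace.single j (1:ℝ))).hasFDerivAt).comp_hasDerivAt t hl
      have heq : (fun r : ℝ => q (Φ (0, z) + r • EuclideanSpace.single j (1:ℝ)))
          = fun r : ℝ => q (Φ (r, z)) := by
        funext r; rw [← hline r z]
      rw [Function.comp_def, heq, ← hline t z] at hcomp
      exact hcomp
    rw [integral_of_hasDerivAt_of_tendsto hder hz htz.2 htz.1, sub_zero]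
  calc (∫ z : Fin m → ℝ, ∫ t, D (Φ (t, z))) = ∫ z : Fin m → ℝ, (0:ℝ) :=
        integral_congr_ae hzero
    _ = 0 := integral_zero _ _

end Aux

/-- **Conditional consistency of the residual-corrected first-order lookahead estimator.**
If the value gradient decomposes exactly as `∇V = γ ∇r̂ + g`, then the residual-corrected
estimator `Ψ̂ = (σ²/(αΩ)) ∫ (γ∇r̂(y) + g(y)) q(y) dy` exactly matches the mean of the
tilted kernel: `κ x + Ω(s_ref + Ψ̂) = ∫ y q(y) dy`. -/
theorem residual_first_order_consistency
    (d : ℕ) (hd : 1 ≤ d) (α σ κ Ω : ℝ) (hα : 0 < α) (hσ : 0 < σ) (hΩ : Ω ≠ 0)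
    (x sref : EuclideanSpace ℝ (Fin d))
    (μref : EuclideanSpace ℝ (Fin d)) (hμref : μref = κ • x + Ω • sref)
    (V : EuclideanSpace ℝ (Fin d) → ℝ) (hV : ContDiff ℝ 1 V)
    (Z : ℝ) (hZdef : Z = ∫ y, Real.exp (V y / α) * gaussDensity d μref σ y)
    (hZint : Integrable (fun y => Real.exp (V y / α) * gaussDensity d μref σ y))
    (hZpos : 0 < Z)
    (q : EuclideanSpace ℝ (Fin d) → ℝ)
    (hq : ∀ y, q y = Real.exp (V y / α) * gaussDensity d μref σ y / Z)
    (hint1 : ∀ j : Fin d, Integrable (fun y : EuclideanSpace ℝ (Fin d) => y j * q y))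
    (hint2 : ∀ j : Fin d, Integrable (fun y : EuclideanSpace ℝ (Fin d) =>
      fderiv ℝ V y (EuclideanSpace.single j (1 : ℝ)) * q y))
    (hint3 : ∀ j : Fin d, Integrable (fun y : EuclideanSpace ℝ (Fin d) =>
      fderiv ℝ q y (EuclideanSpace.single j (1 : ℝ))))
    (htail : ∀ j : Fin d, ∀ᵐ y : EuclideanSpace ℝ (Fin d),
      Tendsto (fun r : ℝ => q (WithLp.toLp 2 (Function.update y j r))) atTop (nhds 0) ∧
      Tendsto (fun r : ℝ => q (WithLp.toLp 2 (Function.update y j r))) atBot (nhds 0))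
    (γ : ℝ) (rhat : EuclideanSpace ℝ (Fin d) → ℝ) (hrhat : Differentiable ℝ rhat)
    (g : EuclideanSpace ℝ (Fin d) → EuclideanSpace ℝ (Fin d))
    (hdecomp : ∀ y, gradient V y = γ • gradient rhat y + g y)
    (Ψhat : EuclideanSpace ℝ (Fin d))
    (hΨ : Ψhat = (σ ^ 2 / (α * Ω)) • ∫ y, q y • (γ • gradient rhat y + g y)) :
    κ • x + Ω • (sref + Ψhat) = ∫ y, q y • y := by
  classical
  obtain ⟨m, rfl⟩ : ∃ m, d = m + 1 := ⟨d - 1, (Nat.succ_pred_eq_of_pos hd).symm⟩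
  -- q is everywhere differentiable with explicit derivative
  set C : ℝ := (2 * Real.pi * σ ^ 2) ^ (-((m:ℕ)+1 : ℝ) / 2) with hC
  set W : EuclideanSpace ℝ (Fin (m+1)) → ℝ :=
    fun y => α⁻¹ * V y - (2*σ^2)⁻¹ * ‖y - μref‖^2 with hW
  have hqW : ∀ y, q y = (C / Z) * Real.exp (W y) := by
    intro y
    rw [hq y, gaussDensity, show V y / α = α⁻¹ * V y by ring,
      show -‖y - μref‖^2/(2*σ^2) = -((2*σ^2)⁻¹ * ‖y - μref‖^2) by ring, hW]
    rw [hC]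
    push_cast
    simp only [sub_eq_add_neg, Real.exp_add]
    ring
  have hVd := (hV.differentiable one_ne_zero)
  have hqD : ∀ y, HasFDerivAt q
      (q y • (α⁻¹ • fderiv ℝ V y - (2*σ^2)⁻¹ • ((2:ℝ) • innerSL ℝ (y - μref)))) y := by
    intro y
    have hN : HasFDerivAt (fun y : EuclideanSpace ℝ (Fin (m+1)) => ‖y - μref‖^2)
        ((2:ℝ) • innerSL ℝ (y - μref)) y := by
      have := ((hasFDerivAt_id y).sub_const μref).norm_sq
      refine this.congr_fderiv ?_
      ext v
      simp [two_smul]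
    have hWd : HasFDerivAt W
        (α⁻¹ • fderiv ℝ V y - (2*σ^2)⁻¹ • ((2:ℝ) • innerSL ℝ (y - μref))) y :=
      (((hVd y).hasFDerivAt).const_mul α⁻¹).sub (hN.const_mul (2*σ^2)⁻¹)
    have h2 := (hWd.exp).const_mul (C / Z)
    have heq : (fun y => (C / Z) * Real.exp (W y)) = q := by
      funext y; rw [hqW y]
    rw [heq] at h2
    rw [smul_smul, ← hqW y] at h2
    exact h2
  have hDval : ∀ (j : Fin (m+1)) y, fderiv ℝ q y (EuclideanSpace.single j 1)
      = α⁻¹ * (fderiv ℝ V y (EuclideanSpace.single j 1) * q y)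
        - (σ^2)⁻¹ * (y j * q y) + ((σ^2)⁻¹ * μref j) * q y := by
    intro j y
    rw [(hqD y).fderiv]
    have hin : @inner ℝ _ _ (y - μref) (EuclideanSpace.single j (1:ℝ)) = y j - μref j := by
      rw [EuclideanSpace.inner_single_right]; simp
    simp only [ContinuousLinearMap.coe_smul', Pi.smul_apply, ContinuousLinearMap.coe_sub',
      Pi.sub_apply, smul_eq_mul, innerSL_apply_apply]
    rw [hin]
    field_simp
    ring
  -- basic integrals
  have hqint : Integrable q := by
    have : q = fun y => (Real.exp (V y / α) * gaussDensity (m+1) μref σ y) / Z := funext hq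
    rw [this]
    exact hZint.div_const Z
  have hqone : (∫ y, q y) = 1 := by
    have : q = fun y => (Real.exp (V y / α) * gaussDensity (m+1) μref σ y) / Z := funext hq
    rw [this, integral_div, ← hZdef, div_self hZpos.ne']
  -- the key moment identity
  have moment : ∀ j : Fin (m+1),
      σ ^ 2 / α * (∫ y, fderiv ℝ V y (EuclideanSpace.single j (1:ℝ)) * q y)
        = (∫ y, y j * q y) - μref j := by
    intro j
    have hzero : ∫ y, fderiv ℝ q y (EuclideanSpace.single j (1:ℝ)) = 0 :=
      integral_partial_deriv_eq_zero m j q (fun y => (hqD y).differentiableAt)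
        (hint3 j) (htail j)
    have hA := (hint2 j).const_mul α⁻¹
    have hB := (hint1 j).const_mul (σ^2)⁻¹
    have hCq := hqint.const_mul ((σ^2)⁻¹ * μref j)
    have hsplit : ∫ y, fderiv ℝ q y (EuclideanSpace.single j (1:ℝ))
        = α⁻¹ * (∫ y, fderiv ℝ V y (EuclideanSpace.single j (1:ℝ)) * q y)
          - (σ^2)⁻¹ * (∫ y, y j * q y) + ((σ^2)⁻¹ * μref j) * (∫ y, q y) := by
      have heq : (fun y => fderiv ℝ q y (EuclideanSpace.single j (1:ℝ)))
          = fun y => α⁻¹ * (fderiv ℝ V y (EuclideanSpace.single j 1) * q y)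
            - (σ^2)⁻¹ * (y j * q y) + ((σ^2)⁻¹ * μref j) * q y := funext (hDval j)
      have h1 : ∫ y, (α⁻¹ * (fderiv ℝ V y (EuclideanSpace.single j 1) * q y)
            - (σ^2)⁻¹ * (y j * q y) + ((σ^2)⁻¹ * μref j) * q y)
          = (∫ y, (α⁻¹ * (fderiv ℝ V y (EuclideanSpace.single j 1) * q y)
              - (σ^2)⁻¹ * (y j * q y))) + ∫ y, ((σ^2)⁻¹ * μref j) * q y :=
        integral_add (hA.sub hB) hCq
      have h2 : ∫ y, (α⁻¹ * (fderiv ℝ V y (EuclideanSpace.single j 1) * q y)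
            - (σ^2)⁻¹ * (y j * q y))
          = (∫ y, α⁻¹ * (fderiv ℝ V y (EuclideanSpace.single j 1) * q y))
            - ∫ y, (σ^2)⁻¹ * (y j * q y) :=
        integral_sub hA hB
      rw [heq, h1, h2, integral_const_mul, integral_const_mul, integral_const_mul]
    rw [hzero, hqone, mul_one] at hsplit
    set J := ∫ y, fderiv ℝ V y (EuclideanSpace.single j (1:ℝ)) * q y
    set I := ∫ y, y j * q y
    have hσ2 : (σ:ℝ)^2 ≠ 0 := by positivity
    have hI : I = σ^2 * (α⁻¹ * J) + μref j := by
      have h1 : (σ^2)⁻¹ * I = α⁻¹ * J + (σ^2)⁻¹ * μref j := by linarith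
      calc I = σ^2 * ((σ^2)⁻¹ * I) := by field_simp
        _ = σ^2 * (α⁻¹ * J + (σ^2)⁻¹ * μref j) := by rw [h1]
        _ = σ^2 * (α⁻¹ * J) + σ^2 * ((σ^2)⁻¹ * μref j) := by ring
        _ = σ^2 * (α⁻¹ * J) + μref j := by
            congr 1
            field_simp
    rw [hI]
    field_simp
    ring
  -- expand vector integrals over the coordinate basis
  have hmean : (∫ y, q y • y)
      = ∑ j : Fin (m+1), (∫ y, y j * q y) • EuclideanSpace.single j (1:ℝ) := by
    have hexp : (fun y : EuclideanSpace ℝ (Fin (m+1)) => q y • y)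
        = fun y => ∑ j : Fin (m+1), (y j * q y) • EuclideanSpace.single j (1:ℝ) := by
      funext y
      ext i
      have h1 : (q y • y) i = q y * y i := rfl
      have h2 : (∑ j : Fin (m+1), (y j * q y) • EuclideanSpace.single j (1:ℝ)) i
          = ∑ j : Fin (m+1), (y j * q y) * (EuclideanSpace.single j (1:ℝ) i) := by
        rw [WithLp.ofLp_sum, Finset.sum_apply]
        rfl
      rw [h1, h2]
      simp [EuclideanSpace.single_apply, mul_ite, Finset.sum_ite_eq]
      ring
    rw [hexp, integral_finset_sum _ (fun j _ => (hint1 j).smul_const _)]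
    exact Finset.sum_congr rfl fun j _ => integral_smul_const _ _
  have hgradint : (∫ y, q y • (γ • gradient rhat y + g y))
      = ∑ j : Fin (m+1),
          (∫ y, fderiv ℝ V y (EuclideanSpace.single j (1:ℝ)) * q y)
            • EuclideanSpace.single j (1:ℝ) := by
    have hexp : (fun y : EuclideanSpace ℝ (Fin (m+1)) => q y • (γ • gradient rhat y + g y))
        = fun y => ∑ j : Fin (m+1),
            (fderiv ℝ V y (EuclideanSpace.single j (1:ℝ)) * q y)
              • EuclideanSpace.single j (1:ℝ) := by
      funext y
      rw [← hdecomp y]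
      ext i
      have h1 : (q y • gradient V y) i = q y * (gradient V y) i := rfl
      have h2 : (∑ j : Fin (m+1), (fderiv ℝ V y (EuclideanSpace.single j (1:ℝ)) * q y)
            • EuclideanSpace.single j (1:ℝ)) i
          = ∑ j : Fin (m+1), (fderiv ℝ V y (EuclideanSpace.single j (1:ℝ)) * q y)
              * (EuclideanSpace.single j (1:ℝ) i) := by
        rw [WithLp.ofLp_sum, Finset.sum_apply]
        rfl
      rw [h1, h2, gradient_coord]
      simp [EuclideanSpace.single_apply, mul_ite, Finset.sum_ite_eq]
      ring
    rw [hexp, integral_finset_sum _ (fun j _ => (hint2 j).smul_const _)]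
    exact Finset.sum_congr rfl fun j _ => integral_smul_const _ _
  -- final assembly
  rw [hΨ, hgradint, hmean]
  rw [smul_add, ← add_assoc, ← hμref, smul_smul]
  have hc : Ω * (σ ^ 2 / (α * Ω)) = σ ^ 2 / α := by
    field_simp
  rw [hc]
  ext i
  have hL : (μref + (σ ^ 2 / α) • ∑ j : Fin (m+1),
      (∫ y, fderiv ℝ V y (EuclideanSpace.single j (1:ℝ)) * q y)
        • EuclideanSpace.single j (1:ℝ)) i
      = μref i + (σ ^ 2 / α) * ∑ j : Fin (m+1),
        (∫ y, fderiv ℝ V y (EuclideanSpace.single j (1:ℝ)) * q y)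
          * (EuclideanSpace.single j (1:ℝ) i) := by
    have : (∑ j : Fin (m+1), (∫ y, fderiv ℝ V y (EuclideanSpace.single j (1:ℝ)) * q y)
        • EuclideanSpace.single j (1:ℝ)) i
        = ∑ j : Fin (m+1), (∫ y, fderiv ℝ V y (EuclideanSpace.single j (1:ℝ)) * q y)
          * (EuclideanSpace.single j (1:ℝ) i) := by
      rw [WithLp.ofLp_sum, Finset.sum_apply]; rfl
    rw [show (μref + (σ ^ 2 / α) • ∑ j : Fin (m+1),
      (∫ y, fderiv ℝ V y (EuclideanSpace.single j (1:ℝ)) * q y)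
        • EuclideanSpace.single j (1:ℝ)) i = μref i + (σ ^ 2 / α) * (∑ j : Fin (m+1),
      (∫ y, fderiv ℝ V y (EuclideanSpace.single j (1:ℝ)) * q y)
        • EuclideanSpace.single j (1:ℝ)) i from rfl, this]
  have hR : (∑ j : Fin (m+1), (∫ y, y j * q y) • EuclideanSpace.single j (1:ℝ)) i
      = ∑ j : Fin (m+1), (∫ y, y j * q y) * (EuclideanSpace.single j (1:ℝ) i) := by
    rw [WithLp.ofLp_sum, Finset.sum_apply]; rfl
  rw [hL, hR]
  simp only [EuclideanSpace.single_apply, mul_ite, mul_one, mul_zero, Finset.sum_ite_eq,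
    Finset.mem_univ, if_true]
  have := moment i
  linarith
end

section
/- Let d ≥ 1 and let v_θ, v†, v_f ∈ ℝ^d and β, c ∈ ℝ. Then ((1+c)/2) ‖(1−β) v† + β v_θ − v_f‖² + ((1−c)/2) ‖(1+β) v† − β v_θ − v_f‖² = β c ‖v_θ − v_f‖² + β(β − c) ‖v_θ − v†‖² + (1 − β c) ‖v† − v_f‖². (The DiffusionNFT objective decomposes exactly into a reward-weighted regression term toward the forward target, an old-policy trust-region anchor, and a constant independent of v_θ.) -/
/-- **Exact decomposition of the DiffusionNFT objective.**
`((1+c)/2)‖(1−β)v† + βv_θ − v_f‖² + ((1−c)/2)‖(1+β)v† − βv_θ − v_f‖²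
 = βc‖v_θ − v_f‖² + β(β−c)‖v_θ − v†‖² + (1−βc)‖v† − v_f‖²`:
a reward-weighted regression term toward the forward target, an old-policy
trust-region anchor, and a constant independent of `v_θ`. -/
theorem diffusion_nft_decomposition
    (d : ℕ) (hd : 1 ≤ d) (β c : ℝ)
    (vθ vdag vf : EuclideanSpace ℝ (Fin d)) :
    ((1 + c) / 2) * ‖(1 - β) • vdag + β • vθ - vf‖ ^ 2
      + ((1 - c) / 2) * ‖(1 + β) • vdag - β • vθ - vf‖ ^ 2
    = β * c * ‖vθ - vf‖ ^ 2 + β * (β - c) * ‖vθ - vdag‖ ^ 2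
      + (1 - β * c) * ‖vdag - vf‖ ^ 2 := by
  set a := vdag - vf with ha
  set b := vθ - vdag with hb
  have h1 : (1 - β) • vdag + β • vθ - vf = a + β • b := by
    simp [ha, hb, smul_sub, sub_smul]; module
  have h2 : (1 + β) • vdag - β • vθ - vf = a - β • b := by
    simp [ha, hb, smul_sub, sub_smul]; module
  have h3 : vθ - vf = a + b := by simp [ha, hb]
  rw [h1, h2, h3]
  have e1 : ‖a + β • b‖ ^ 2 = ‖a‖ ^ 2 + 2 * β * inner ℝ a b + β ^ 2 * ‖b‖ ^ 2 := by
    rw [@norm_add_sq_real, real_inner_smul_right, norm_smul]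
    simp [mul_pow]; ring
  have e2 : ‖a - β • b‖ ^ 2 = ‖a‖ ^ 2 - 2 * β * inner ℝ a b + β ^ 2 * ‖b‖ ^ 2 := by
    rw [@norm_sub_sq_real, real_inner_smul_right, norm_smul]
    simp [mul_pow]; ring
  have e3 : ‖a + b‖ ^ 2 = ‖a‖ ^ 2 + 2 * inner ℝ a b + ‖b‖ ^ 2 := by
    rw [@norm_add_sq_real]
  rw [e1, e2, e3]; ring
end

section
/- Let β : ℝ → ℝ be continuous, define ᾱ(t) := exp(−∫₀ᵗ β(s) ds), and set a(t) := √(ᾱ(t)) and b(t) := √(1 − ᾱ(t)). Then for every t with 0 < ᾱ(t) < 1, a and b are differentiable at t and the two coefficients of the affine-flow ODE satisfy a'(t)/a(t) = −β(t)/2 and ( a'(t) b(t)² − a(t) b'(t) b(t) )/a(t) = −β(t)/2. (The flow ODE of the VP-SDE therefore takes the form dx = −(β(t)/2) x dt − (β(t)/2) ∇ log p_t(x) dt.) -/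
open intervalIntegral

/-- **Coefficients of the affine-flow ODE for the VP-SDE.**
With `ᾱ(t) = exp(−∫₀ᵗ β(s) ds)`, `a(t) = √(ᾱ(t))`, `b(t) = √(1−ᾱ(t))`, at any `t`
with `0 < ᾱ(t) < 1`, `a` and `b` are differentiable and the two coefficients of the
affine-flow ODE satisfy `a'(t)/a(t) = −β(t)/2` and
`(a'(t)b(t)² − a(t)b'(t)b(t))/a(t) = −β(t)/2`: the flow ODE of the VP-SDE is
`dx = −(β(t)/2)x dt − (β(t)/2)∇log p_t(x) dt`. -/
theorem vp_sde_flow_ode_coefficients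
    (β : ℝ → ℝ) (hβ : Continuous β)
    (abar a b : ℝ → ℝ)
    (habar : ∀ t, abar t = Real.exp (-(∫ s in (0 : ℝ)..t, β s)))
    (ha : ∀ t, a t = Real.sqrt (abar t))
    (hb : ∀ t, b t = Real.sqrt (1 - abar t)) :
    ∀ t : ℝ, 0 < abar t → abar t < 1 →
      DifferentiableAt ℝ a t ∧ DifferentiableAt ℝ b t ∧
      deriv a t / a t = -β t / 2 ∧
      (deriv a t * (b t) ^ 2 - a t * deriv b t * b t) / a t = -β t / 2 := by
  have hA : abar = fun t => Real.exp (-(∫ s in (0 : ℝ)..t, β s)) := funext habar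
  subst hA
  have hAf : a = fun t => Real.sqrt (Real.exp (-(∫ s in (0 : ℝ)..t, β s))) := funext ha
  subst hAf
  have hBf : b = fun t => Real.sqrt (1 - Real.exp (-(∫ s in (0 : ℝ)..t, β s))) := funext hb
  subst hBf
  intro t h0 h1
  set E : ℝ → ℝ := fun u => Real.exp (-(∫ s in (0 : ℝ)..u, β s)) with hEdef
  have hE : HasDerivAt E (E t * (-β t)) t := by
    have hI : HasDerivAt (fun u => ∫ s in (0 : ℝ)..u, β s) (β t) t :=
      (hβ.integral_hasStrictDerivAt 0 t).hasDerivAt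
    exact hI.neg.exp
  have hEt0 : (0 : ℝ) < E t := Real.exp_pos _
  have hEt1 : (0 : ℝ) < 1 - E t := by simpa using sub_pos.mpr h1
  have hsa : Real.sqrt (E t) ≠ 0 := ne_of_gt (Real.sqrt_pos.mpr hEt0)
  have hsb : Real.sqrt (1 - E t) ≠ 0 := ne_of_gt (Real.sqrt_pos.mpr hEt1)
  have hda : HasDerivAt (fun u => Real.sqrt (E u))
      (1 / (2 * Real.sqrt (E t)) * (E t * (-β t))) t :=
    (Real.hasDerivAt_sqrt (ne_of_gt hEt0)).comp t hE
  have hdb : HasDerivAt (fun u => Real.sqrt (1 - E u))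
      (1 / (2 * Real.sqrt (1 - E t)) * (-(E t * (-β t)))) t :=
    (Real.hasDerivAt_sqrt (ne_of_gt hEt1)).comp t (hE.const_sub 1)
  have hda' : deriv (fun u => Real.sqrt (E u)) t
      = 1 / (2 * Real.sqrt (E t)) * (E t * (-β t)) := hda.deriv
  have hdb' : deriv (fun u => Real.sqrt (1 - E u)) t
      = 1 / (2 * Real.sqrt (1 - E t)) * (-(E t * (-β t))) := hdb.deriv
  have hsqa : Real.sqrt (E t) ^ 2 = E t := Real.sq_sqrt hEt0.le
  have hsqb : Real.sqrt (1 - E t) ^ 2 = 1 - E t := Real.sq_sqrt hEt1.le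
  refine ⟨hda.differentiableAt, hdb.differentiableAt, ?_, ?_⟩
  · rw [hda']
    field_simp
    simp only [hEdef] at hsqa ⊢
    linear_combination (β t) * hsqa
  · rw [hda', hdb']
    field_simp
    simp only [hEdef] at hsqa hsqb ⊢
    linear_combination ((1 - Real.exp (-∫ (s : ℝ) in (0:ℝ)..t, β s)) * β t *
      Real.sqrt (1 - Real.exp (-∫ (s : ℝ) in (0:ℝ)..t, β s))) * hsqa
      - (Real.exp (-∫ (s : ℝ) in (0:ℝ)..t, β s) * β t *
      Real.sqrt (1 - Real.exp (-∫ (s : ℝ) in (0:ℝ)..t, β s))) * hsqb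
end
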